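/- For a level-k weight λ of affine su(N) with conformal dimension Δ_λ = c₂(λ)/(k+N) and the rotation σ of the extended Dynkin diagram, Δ_{σ(λ)} − Δ_λ − ((N−1)k − 2τ(λ))/(2N) is an integer; consequently Δ_{σ(λ)} − Δ_λ − Δ_{σ(1)} + τ(λ)/N ∈ ℤ and Δ_{σ^{-1}(λ)} − Δ_λ − Δ_{σ^{-1}(1)} − τ(λ)/N ∈ ℤ. -/

import Mathlib

noncomputable section

/-- The su(N) inner product of (ρ-shifted) weights written in the basis of
fundamental weights: `⟨Λ_i, Λ_j⟩ = min(i,j) − ij/N` (1-indexed). -/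
def wIP (N : ℕ) (l m : Fin (N - 1) → ℤ) : ℚ :=
  ∑ i : Fin (N - 1), ∑ j : Fin (N - 1),
    (l i : ℚ) * (m j : ℚ) *
      (min (((i : ℕ) : ℚ) + 1) (((j : ℕ) : ℚ) + 1) -
        (((i : ℕ) : ℚ) + 1) * (((j : ℕ) : ℚ) + 1) / (N : ℚ))

/-- The conformal dimension `Δ_λ = c₂(λ)/(k+N) = (|λ|² − |ρ|²)/(2h)` of the
level-`k` weight `λ` (shifted by `ρ`, so the vacuum is `(1,…,1)`), `h = N + k`. -/
def cDim (N h : ℕ) (l : Fin (N - 1) → ℤ) : ℚ :=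
  (wIP N l l - wIP N (fun _ => 1) (fun _ => 1)) / (2 * (h : ℚ))

/-- The N-ality `τ(λ) = Σ_i (λ_i − 1)·i`. -/
def nality (N : ℕ) (l : Fin (N - 1) → ℤ) : ℤ :=
  ∑ i : Fin (N - 1), (l i - 1) * (((i : ℕ) : ℤ) + 1)

/-- The diagram rotation `σ(λ) = (h − Σ_j λ_j, λ_1, …, λ_{N−2})`. -/
def rot (N h : ℕ) (l : Fin (N - 1) → ℤ) : Fin (N - 1) → ℤ :=
  fun j => if (j : ℕ) = 0 then (h : ℤ) - ∑ i, l i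
    else l ⟨(j : ℕ) - 1, lt_of_le_of_lt (Nat.pred_le _) j.isLt⟩

/-- The inverse rotation `σ⁻¹(λ) = (λ_2, …, λ_{N−1}, h − Σ_j λ_j)`. -/
def rotInv (N h : ℕ) (l : Fin (N - 1) → ℤ) : Fin (N - 1) → ℤ :=
  fun j => if h' : (j : ℕ) + 1 < N - 1 then l ⟨(j : ℕ) + 1, h'⟩ else (h : ℤ) - ∑ i, l i

lemma sum_split {n : ℕ} (f g : Fin n → ℚ) (A B : ℚ)
    (hg : ∀ i, g i = A * f i + B * (((i : ℕ) : ℚ) * f i)) :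
    ∑ i, g i = A * (∑ i, f i) + B * ∑ i : Fin n, ((i : ℕ) : ℚ) * f i := by
  simp only [hg]
  rw [Finset.sum_add_distrib, ← Finset.mul_sum, ← Finset.mul_sum]

lemma sum2_succ (n : ℕ) (F : Fin (n + 1) → Fin (n + 1) → ℚ) :
    ∑ i, ∑ j, F i j
      = F 0 0 + (∑ j : Fin n, F 0 j.succ) + ((∑ i : Fin n, F i.succ 0)
        + ∑ i : Fin n, ∑ j : Fin n, F i.succ j.succ) := by
  simp only [Fin.sum_univ_succ, Finset.sum_add_distrib]
  ring

lemma sum2_castSucc (n : ℕ) (F : Fin (n + 1) → Fin (n + 1) → ℚ) :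
    ∑ i, ∑ j, F i j
      = (∑ i : Fin n, ∑ j : Fin n, F i.castSucc j.castSucc
          + ∑ i : Fin n, F i.castSucc (Fin.last n))
        + ((∑ j : Fin n, F (Fin.last n) j.castSucc) + F (Fin.last n) (Fin.last n)) := by
  simp only [Fin.sum_univ_castSucc, Finset.sum_add_distrib]
  ring

lemma rot_eq (n h : ℕ) (l : Fin (n + 1) → ℤ) :
    rot (n + 2) h l = Fin.cons ((h : ℤ) - ∑ i, l i) (fun i : Fin n => l i.castSucc) := by
  funext j
  refine Fin.cases ?_ ?_ j
  · simp [rot]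
  · intro i
    simp only [rot, Fin.val_succ, Nat.succ_ne_zero, if_false, Fin.cons_succ,
      Nat.add_sub_cancel]
    congr 1

lemma rotInv_eq (n h : ℕ) (l : Fin (n + 1) → ℤ) :
    rotInv (n + 2) h l = Fin.snoc (fun i : Fin n => l i.succ) ((h : ℤ) - ∑ i, l i) := by
  funext j
  refine Fin.lastCases ?_ ?_ j
  · simp [rotInv]
  · intro i
    have hlt : (i.castSucc : ℕ) + 1 < n + 2 - 1 := by simp [i.isLt]
    simp only [rotInv, dif_pos hlt, Fin.snoc_castSucc]
    congr 1

lemma wIP_succ (n : ℕ) (l m : Fin (n + 1) → ℤ) :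
    wIP (n + 2) l m = ∑ i : Fin (n + 1), ∑ j : Fin (n + 1),
      (l i : ℚ) * (m j : ℚ) *
        (min (((i : ℕ) : ℚ) + 1) (((j : ℕ) : ℚ) + 1) -
          (((i : ℕ) : ℚ) + 1) * (((j : ℕ) : ℚ) + 1) / (((n : ℚ) + 2))) := by
  have : ((n + 2 : ℕ) : ℚ) = (n : ℚ) + 2 := by push_cast; ring
  rw [wIP, ← this]
  rfl

lemma wIP_rot (n h : ℕ) (l : Fin (n + 1) → ℤ) :
    wIP (n + 2) (rot (n + 2) h l) (rot (n + 2) h l) - wIP (n + 2) l l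
      = (h : ℚ) * (((n : ℚ) + 1) * (h : ℚ)
          - 2 * ∑ i : Fin (n + 1), (((i : ℕ) : ℚ) + 1) * (l i : ℚ)) / ((n : ℚ) + 2) := by
  have hN : ((n : ℚ) + 2) ≠ 0 := by positivity
  rw [rot_eq, wIP_succ, wIP_succ, sum2_succ, sum2_castSucc]
  simp only [Fin.cons_zero, Fin.cons_succ, Fin.val_zero, Fin.val_succ, Fin.coe_castSucc,
    Fin.val_last, Nat.cast_zero, Nat.cast_add, Nat.cast_one, zero_add, min_self]
  set aZ : ℤ := (h : ℤ) - ∑ i : Fin (n + 1), l i with haZ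
  set b : ℚ := ((l (Fin.last n) : ℤ) : ℚ) with hb
  set Sf : ℚ := ∑ i : Fin n, ((l i.castSucc : ℤ) : ℚ) with hSf
  set Tf : ℚ := ∑ i : Fin n, ((i : ℕ) : ℚ) * ((l i.castSucc : ℤ) : ℚ) with hTf
  have E1 : (∑ x : Fin n, (aZ : ℚ) * ((l x.castSucc : ℤ) : ℚ) *
        (min (1 : ℚ) (((x : ℕ) : ℚ) + 1 + 1) - 1 * (((x : ℕ) : ℚ) + 1 + 1) / ((n : ℚ) + 2)))
      = ((aZ : ℚ) * (1 - 2 / ((n : ℚ) + 2))) * Sf + (-(aZ : ℚ) / ((n : ℚ) + 2)) * Tf := by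
    rw [hSf, hTf]
    refine sum_split _ _ _ _ (fun x => ?_)
    have hx0 : (0 : ℚ) ≤ ((x : ℕ) : ℚ) := Nat.cast_nonneg _
    rw [min_eq_left (by linarith)]
    field_simp
    ring
  have E2 : (∑ x : Fin n, ((l x.castSucc : ℤ) : ℚ) * (aZ : ℚ) *
        (min (((x : ℕ) : ℚ) + 1 + 1) (1 : ℚ) - (((x : ℕ) : ℚ) + 1 + 1) * 1 / ((n : ℚ) + 2)))
      = ((aZ : ℚ) * (1 - 2 / ((n : ℚ) + 2))) * Sf + (-(aZ : ℚ) / ((n : ℚ) + 2)) * Tf := by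
    rw [hSf, hTf]
    refine sum_split _ _ _ _ (fun x => ?_)
    have hx0 : (0 : ℚ) ≤ ((x : ℕ) : ℚ) := Nat.cast_nonneg _
    rw [min_eq_right (by linarith)]
    field_simp
    ring
  have E3 : (∑ x : Fin n, ∑ y : Fin n, ((l x.castSucc : ℤ) : ℚ) * ((l y.castSucc : ℤ) : ℚ) *
        (min (((x : ℕ) : ℚ) + 1 + 1) (((y : ℕ) : ℚ) + 1 + 1) -
          (((x : ℕ) : ℚ) + 1 + 1) * (((y : ℕ) : ℚ) + 1 + 1) / ((n : ℚ) + 2)))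
      = (∑ x : Fin n, ∑ y : Fin n, ((l x.castSucc : ℤ) : ℚ) * ((l y.castSucc : ℤ) : ℚ) *
          (min (((x : ℕ) : ℚ) + 1) (((y : ℕ) : ℚ) + 1) -
            (((x : ℕ) : ℚ) + 1) * (((y : ℕ) : ℚ) + 1) / ((n : ℚ) + 2)))
        + (((1 - 3 / ((n : ℚ) + 2)) * Sf - Tf / ((n : ℚ) + 2)) * Sf
            + (-(Sf / ((n : ℚ) + 2))) * Tf) := by
    have inner : ∀ x : Fin n,
        (∑ y : Fin n, ((l x.castSucc : ℤ) : ℚ) * ((l y.castSucc : ℤ) : ℚ) *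
          (min (((x : ℕ) : ℚ) + 1 + 1) (((y : ℕ) : ℚ) + 1 + 1) -
            (((x : ℕ) : ℚ) + 1 + 1) * (((y : ℕ) : ℚ) + 1 + 1) / ((n : ℚ) + 2)))
        = (∑ y : Fin n, ((l x.castSucc : ℤ) : ℚ) * ((l y.castSucc : ℤ) : ℚ) *
            (min (((x : ℕ) : ℚ) + 1) (((y : ℕ) : ℚ) + 1) -
              (((x : ℕ) : ℚ) + 1) * (((y : ℕ) : ℚ) + 1) / ((n : ℚ) + 2)))
          + ((((l x.castSucc : ℤ) : ℚ) * (1 - (((x : ℕ) : ℚ) + 3) / ((n : ℚ) + 2))) * Sf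
              + (-((l x.castSucc : ℤ) : ℚ) / ((n : ℚ) + 2)) * Tf) := by
      intro x
      rw [hSf, hTf,
        ← sum_split (fun y => ((l y.castSucc : ℤ) : ℚ))
          (fun y => (((l x.castSucc : ℤ) : ℚ) * (1 - (((x : ℕ) : ℚ) + 3) / ((n : ℚ) + 2))) *
              ((l y.castSucc : ℤ) : ℚ)
            + (-((l x.castSucc : ℤ) : ℚ) / ((n : ℚ) + 2)) *
                (((y : ℕ) : ℚ) * ((l y.castSucc : ℤ) : ℚ)))
          _ _ (fun y => rfl), ← Finset.sum_add_distrib]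
      refine Finset.sum_congr rfl (fun y _ => ?_)
      rw [min_add_add_right]
      field_simp
      ring
    rw [Finset.sum_congr rfl (fun x _ => inner x), Finset.sum_add_distrib]
    congr 1
    rw [hSf, hTf]
    rw [sum_split (fun x => ((l x.castSucc : ℤ) : ℚ)) _
        ((1 - 3 / ((n : ℚ) + 2)) * Sf - Tf / ((n : ℚ) + 2)) (-(Sf / ((n : ℚ) + 2)))
        (fun x => by field_simp; ring)]
  have E5 : (∑ x : Fin n, ((l x.castSucc : ℤ) : ℚ) * b *
        (min (((x : ℕ) : ℚ) + 1) ((n : ℚ) + 1) -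
          (((x : ℕ) : ℚ) + 1) * ((n : ℚ) + 1) / ((n : ℚ) + 2)))
      = (b / ((n : ℚ) + 2)) * Sf + (b / ((n : ℚ) + 2)) * Tf := by
    rw [hSf, hTf]
    refine sum_split _ _ _ _ (fun x => ?_)
    have hx : ((x : ℕ) : ℚ) ≤ (n : ℚ) := by exact_mod_cast x.isLt.le
    rw [min_eq_left (by linarith)]
    field_simp
    ring
  have E6 : (∑ x : Fin n, b * ((l x.castSucc : ℤ) : ℚ) *
        (min ((n : ℚ) + 1) (((x : ℕ) : ℚ) + 1) -
          ((n : ℚ) + 1) * (((x : ℕ) : ℚ) + 1) / ((n : ℚ) + 2)))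
      = (b / ((n : ℚ) + 2)) * Sf + (b / ((n : ℚ) + 2)) * Tf := by
    rw [hSf, hTf]
    refine sum_split _ _ _ _ (fun x => ?_)
    have hx : ((x : ℕ) : ℚ) ≤ (n : ℚ) := by exact_mod_cast x.isLt.le
    rw [min_eq_right (by linarith)]
    field_simp
    ring
  have hsum : ((∑ i : Fin (n + 1), l i : ℤ) : ℚ) = Sf + b := by
    rw [hSf, hb]
    push_cast
    rw [Fin.sum_univ_castSucc]
  have hT : (∑ i : Fin (n + 1), (((i : ℕ) : ℚ) + 1) * ((l i : ℤ) : ℚ))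
      = (Tf + Sf) + ((n : ℚ) + 1) * b := by
    rw [hTf, hSf, hb, Fin.sum_univ_castSucc]
    simp only [Fin.coe_castSucc, Fin.val_last]
    rw [sum_split (fun i => ((l i.castSucc : ℤ) : ℚ)) _ 1 1 (fun i => by ring)]
    ring
  have haQ : ((aZ : ℤ) : ℚ) = (h : ℚ) - (Sf + b) := by
    rw [haZ]
    push_cast [← hsum]
    ring
  rw [E1, E2, E3, E5, E6, hT, haQ]
  field_simp
  ring

lemma wIP_rotInv (n h : ℕ) (l : Fin (n + 1) → ℤ) :
    wIP (n + 2) (rotInv (n + 2) h l) (rotInv (n + 2) h l) - wIP (n + 2) l l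
      = (h : ℚ) * (2 * ∑ i : Fin (n + 1), (((i : ℕ) : ℚ) + 1) * (l i : ℚ)
          + ((n : ℚ) + 1) * (h : ℚ)
          - 2 * ((n : ℚ) + 2) * ∑ i : Fin (n + 1), (l i : ℚ)) / ((n : ℚ) + 2) := by
  have hN : ((n : ℚ) + 2) ≠ 0 := by positivity
  rw [rotInv_eq, wIP_succ, wIP_succ, sum2_castSucc, sum2_succ]
  simp only [Fin.snoc_castSucc, Fin.snoc_last, Fin.cons_zero, Fin.cons_succ, Fin.val_zero,
    Fin.val_succ, Fin.coe_castSucc, Fin.val_last, Nat.cast_zero, Nat.cast_add, Nat.cast_one,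
    zero_add, min_self]
  set aZ : ℤ := (h : ℤ) - ∑ i : Fin (n + 1), l i with haZ
  set c : ℚ := ((l 0 : ℤ) : ℚ) with hc
  set Sg : ℚ := ∑ i : Fin n, ((l i.succ : ℤ) : ℚ) with hSg
  set Tg : ℚ := ∑ i : Fin n, ((i : ℕ) : ℚ) * ((l i.succ : ℤ) : ℚ) with hTg
  have E1 : (∑ x : Fin n, c * ((l x.succ : ℤ) : ℚ) *
        (min (1 : ℚ) (((x : ℕ) : ℚ) + 1 + 1) - 1 * (((x : ℕ) : ℚ) + 1 + 1) / ((n : ℚ) + 2)))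
      = (c * (1 - 2 / ((n : ℚ) + 2))) * Sg + (-c / ((n : ℚ) + 2)) * Tg := by
    rw [hSg, hTg]
    refine sum_split _ _ _ _ (fun x => ?_)
    have hx0 : (0 : ℚ) ≤ ((x : ℕ) : ℚ) := Nat.cast_nonneg _
    rw [min_eq_left (by linarith)]
    field_simp
    ring
  have E2 : (∑ x : Fin n, ((l x.succ : ℤ) : ℚ) * c *
        (min (((x : ℕ) : ℚ) + 1 + 1) (1 : ℚ) - (((x : ℕ) : ℚ) + 1 + 1) * 1 / ((n : ℚ) + 2)))
      = (c * (1 - 2 / ((n : ℚ) + 2))) * Sg + (-c / ((n : ℚ) + 2)) * Tg := by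
    rw [hSg, hTg]
    refine sum_split _ _ _ _ (fun x => ?_)
    have hx0 : (0 : ℚ) ≤ ((x : ℕ) : ℚ) := Nat.cast_nonneg _
    rw [min_eq_right (by linarith)]
    field_simp
    ring
  have E3 : (∑ x : Fin n, ∑ y : Fin n, ((l x.succ : ℤ) : ℚ) * ((l y.succ : ℤ) : ℚ) *
        (min (((x : ℕ) : ℚ) + 1 + 1) (((y : ℕ) : ℚ) + 1 + 1) -
          (((x : ℕ) : ℚ) + 1 + 1) * (((y : ℕ) : ℚ) + 1 + 1) / ((n : ℚ) + 2)))
      = (∑ x : Fin n, ∑ y : Fin n, ((l x.succ : ℤ) : ℚ) * ((l y.succ : ℤ) : ℚ) *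
          (min (((x : ℕ) : ℚ) + 1) (((y : ℕ) : ℚ) + 1) -
            (((x : ℕ) : ℚ) + 1) * (((y : ℕ) : ℚ) + 1) / ((n : ℚ) + 2)))
        + (((1 - 3 / ((n : ℚ) + 2)) * Sg - Tg / ((n : ℚ) + 2)) * Sg
            + (-(Sg / ((n : ℚ) + 2))) * Tg) := by
    have inner : ∀ x : Fin n,
        (∑ y : Fin n, ((l x.succ : ℤ) : ℚ) * ((l y.succ : ℤ) : ℚ) *
          (min (((x : ℕ) : ℚ) + 1 + 1) (((y : ℕ) : ℚ) + 1 + 1) -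
            (((x : ℕ) : ℚ) + 1 + 1) * (((y : ℕ) : ℚ) + 1 + 1) / ((n : ℚ) + 2)))
        = (∑ y : Fin n, ((l x.succ : ℤ) : ℚ) * ((l y.succ : ℤ) : ℚ) *
            (min (((x : ℕ) : ℚ) + 1) (((y : ℕ) : ℚ) + 1) -
              (((x : ℕ) : ℚ) + 1) * (((y : ℕ) : ℚ) + 1) / ((n : ℚ) + 2)))
          + ((((l x.succ : ℤ) : ℚ) * (1 - (((x : ℕ) : ℚ) + 3) / ((n : ℚ) + 2))) * Sg
              + (-((l x.succ : ℤ) : ℚ) / ((n : ℚ) + 2)) * Tg) := by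
      intro x
      rw [hSg, hTg,
        ← sum_split (fun y => ((l y.succ : ℤ) : ℚ))
          (fun y => (((l x.succ : ℤ) : ℚ) * (1 - (((x : ℕ) : ℚ) + 3) / ((n : ℚ) + 2))) *
              ((l y.succ : ℤ) : ℚ)
            + (-((l x.succ : ℤ) : ℚ) / ((n : ℚ) + 2)) *
                (((y : ℕ) : ℚ) * ((l y.succ : ℤ) : ℚ)))
          _ _ (fun y => rfl), ← Finset.sum_add_distrib]
      refine Finset.sum_congr rfl (fun y _ => ?_)
      rw [min_add_add_right]
      field_simp
      ring
    rw [Finset.sum_congr rfl (fun x _ => inner x), Finset.sum_add_distrib]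
    congr 1
    rw [hSg, hTg]
    rw [sum_split (fun x => ((l x.succ : ℤ) : ℚ)) _
        ((1 - 3 / ((n : ℚ) + 2)) * Sg - Tg / ((n : ℚ) + 2)) (-(Sg / ((n : ℚ) + 2)))
        (fun x => by field_simp; ring)]
  have E5 : (∑ x : Fin n, ((l x.succ : ℤ) : ℚ) * (aZ : ℚ) *
        (min (((x : ℕ) : ℚ) + 1) ((n : ℚ) + 1) -
          (((x : ℕ) : ℚ) + 1) * ((n : ℚ) + 1) / ((n : ℚ) + 2)))
      = ((aZ : ℚ) / ((n : ℚ) + 2)) * Sg + ((aZ : ℚ) / ((n : ℚ) + 2)) * Tg := by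
    rw [hSg, hTg]
    refine sum_split _ _ _ _ (fun x => ?_)
    have hx : ((x : ℕ) : ℚ) ≤ (n : ℚ) := by exact_mod_cast x.isLt.le
    rw [min_eq_left (by linarith)]
    field_simp
    ring
  have E6 : (∑ x : Fin n, (aZ : ℚ) * ((l x.succ : ℤ) : ℚ) *
        (min ((n : ℚ) + 1) (((x : ℕ) : ℚ) + 1) -
          ((n : ℚ) + 1) * (((x : ℕ) : ℚ) + 1) / ((n : ℚ) + 2)))
      = ((aZ : ℚ) / ((n : ℚ) + 2)) * Sg + ((aZ : ℚ) / ((n : ℚ) + 2)) * Tg := by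
    rw [hSg, hTg]
    refine sum_split _ _ _ _ (fun x => ?_)
    have hx : ((x : ℕ) : ℚ) ≤ (n : ℚ) := by exact_mod_cast x.isLt.le
    rw [min_eq_right (by linarith)]
    field_simp
    ring
  have hsum : ((∑ i : Fin (n + 1), l i : ℤ) : ℚ) = c + Sg := by
    rw [hSg, hc]
    push_cast
    rw [Fin.sum_univ_succ]
  have hsumQ : (∑ i : Fin (n + 1), ((l i : ℤ) : ℚ)) = c + Sg := by
    rw [← hsum]
    push_cast
    ring
  have hT : (∑ i : Fin (n + 1), (((i : ℕ) : ℚ) + 1) * ((l i : ℤ) : ℚ))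
      = c + (Tg + 2 * Sg) := by
    rw [hTg, hSg, hc, Fin.sum_univ_succ]
    simp only [Fin.val_zero, Fin.val_succ, Nat.cast_zero, Nat.cast_add, Nat.cast_one, zero_add]
    rw [sum_split (fun i => ((l i.succ : ℤ) : ℚ))
        (fun i => (((i : ℕ) : ℚ) + 1 + 1) * ((l i.succ : ℤ) : ℚ)) 2 1 (fun i => by ring)]
    ring
  have haQ : ((aZ : ℤ) : ℚ) = (h : ℚ) - (c + Sg) := by
    rw [haZ]
    push_cast [← hsum]
    ring
  rw [E1, E2, E3, E5, E6, hT, hsumQ, haQ]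
  generalize (∑ x : Fin n, ∑ y : Fin n, ((l x.succ : ℤ) : ℚ) * ((l y.succ : ℤ) : ℚ) *
      (min (((x : ℕ) : ℚ) + 1) (((y : ℕ) : ℚ) + 1) -
        (((x : ℕ) : ℚ) + 1) * (((y : ℕ) : ℚ) + 1) / ((n : ℚ) + 2))) = D
  field_simp
  ring

lemma sum_idx (m : ℕ) : ∑ i : Fin m, (((i : ℕ) : ℚ) + 1) = (m : ℚ) * ((m : ℚ) + 1) / 2 := by
  induction m with
  | zero => simp
  | succ p ih =>
    rw [Fin.sum_univ_castSucc]
    simp only [Fin.coe_castSucc, Fin.val_last]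
    rw [ih]
    push_cast
    ring

/-- For a level-`k` weight `λ` of affine su(N):
`Δ_{σ(λ)} − Δ_λ − ((N−1)k − 2τ(λ))/(2N) ∈ ℤ`, and consequently
`Δ_{σ(λ)} − Δ_λ − Δ_{σ(1)} + τ(λ)/N ∈ ℤ` and
`Δ_{σ⁻¹(λ)} − Δ_λ − Δ_{σ⁻¹(1)} − τ(λ)/N ∈ ℤ`. -/
theorem rotation_conformal_dimension (N k h : ℕ) (hN : 2 ≤ N) (hk : 1 ≤ k)
    (hh : h = N + k)
    (l : Fin (N - 1) → ℤ) (hl : (∀ i, 1 ≤ l i) ∧ (∑ i, l i) < (h : ℤ)) :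
    (∃ z : ℤ, cDim N h (rot N h l) - cDim N h l -
        (((N : ℚ) - 1) * (k : ℚ) - 2 * (nality N l : ℚ)) / (2 * (N : ℚ)) = (z : ℚ)) ∧
    (∃ z : ℤ, cDim N h (rot N h l) - cDim N h l - cDim N h (rot N h (fun _ => 1)) +
        (nality N l : ℚ) / (N : ℚ) = (z : ℚ)) ∧
    (∃ z : ℤ, cDim N h (rotInv N h l) - cDim N h l - cDim N h (rotInv N h (fun _ => 1)) -
        (nality N l : ℚ) / (N : ℚ) = (z : ℚ)) := by
  obtain ⟨n, rfl⟩ : ∃ n, N = n + 2 := ⟨N - 2, by omega⟩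
  subst hh
  have hNq : ((n : ℚ) + 2) ≠ 0 := by positivity
  have hhq : ((n + 2 + k : ℕ) : ℚ) ≠ 0 := by positivity
  have hC : (∑ i : Fin (n + 1), (((i : ℕ) : ℚ) + 1))
      = ((n : ℚ) + 1) * ((n : ℚ) + 2) / 2 := by
    rw [sum_idx]
    push_cast
    ring
  set T : ℚ := ∑ i : Fin (n + 1), (((i : ℕ) : ℚ) + 1) * (l i : ℚ) with hTdef
  set S : ℚ := ∑ i : Fin (n + 1), ((l i : ℤ) : ℚ) with hSdef
  have hnal : ((nality (n + 2) l : ℤ) : ℚ) = T - ((n : ℚ) + 1) * ((n : ℚ) + 2) / 2 := by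
    rw [nality, hTdef, ← hC]
    push_cast
    rw [← Finset.sum_sub_distrib]
    refine Finset.sum_congr rfl (fun i _ => by ring)
  have hT1 : (∑ i : Fin (n + 1), (((i : ℕ) : ℚ) + 1) * (((fun _ : Fin (n + 1) => (1 : ℤ)) i : ℤ) : ℚ))
      = ((n : ℚ) + 1) * ((n : ℚ) + 2) / 2 := by
    rw [← hC]
    exact Finset.sum_congr rfl (fun i _ => by norm_num)
  have hS1 : (∑ i : Fin (n + 1), (((fun _ : Fin (n + 1) => (1 : ℤ)) i : ℤ) : ℚ)) = (n : ℚ) + 1 := by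
    simp [Finset.card_univ]
  have d1 : cDim (n + 2) (n + 2 + k) (rot (n + 2) (n + 2 + k) l) - cDim (n + 2) (n + 2 + k) l
      = (((n : ℚ) + 1) * ((n + 2 + k : ℕ) : ℚ) - 2 * T) / (2 * ((n : ℚ) + 2)) := by
    rw [cDim, cDim, div_sub_div_same]
    rw [show (wIP (n + 2) (rot (n + 2) (n + 2 + k) l) (rot (n + 2) (n + 2 + k) l)
          - wIP (n + 2) (fun _ => 1) (fun _ => 1))
        - (wIP (n + 2) l l - wIP (n + 2) (fun _ => 1) (fun _ => 1))
        = wIP (n + 2) (rot (n + 2) (n + 2 + k) l) (rot (n + 2) (n + 2 + k) l)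
          - wIP (n + 2) l l from by ring]
    rw [wIP_rot n (n + 2 + k) l, ← hTdef]
    field_simp
  have d2 : cDim (n + 2) (n + 2 + k) (rot (n + 2) (n + 2 + k) (fun _ => 1))
      = (((n : ℚ) + 1) * ((n + 2 + k : ℕ) : ℚ) - 2 * (((n : ℚ) + 1) * ((n : ℚ) + 2) / 2))
          / (2 * ((n : ℚ) + 2)) := by
    rw [cDim]
    show (wIP (n + 2) (rot (n + 2) (n + 2 + k) (fun _ : Fin (n + 1) => (1 : ℤ)))
          (rot (n + 2) (n + 2 + k) (fun _ : Fin (n + 1) => (1 : ℤ)))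
        - wIP (n + 2) (fun _ : Fin (n + 1) => (1 : ℤ)) (fun _ : Fin (n + 1) => (1 : ℤ)))
        / (2 * ((n + 2 + k : ℕ) : ℚ)) = _
    rw [wIP_rot n (n + 2 + k) (fun _ => (1 : ℤ)), hT1]
    field_simp
  have d3 : cDim (n + 2) (n + 2 + k) (rotInv (n + 2) (n + 2 + k) l) - cDim (n + 2) (n + 2 + k) l
      = (2 * T + ((n : ℚ) + 1) * ((n + 2 + k : ℕ) : ℚ) - 2 * ((n : ℚ) + 2) * S)
          / (2 * ((n : ℚ) + 2)) := by
    rw [cDim, cDim, div_sub_div_same]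
    rw [show (wIP (n + 2) (rotInv (n + 2) (n + 2 + k) l) (rotInv (n + 2) (n + 2 + k) l)
          - wIP (n + 2) (fun _ => 1) (fun _ => 1))
        - (wIP (n + 2) l l - wIP (n + 2) (fun _ => 1) (fun _ => 1))
        = wIP (n + 2) (rotInv (n + 2) (n + 2 + k) l) (rotInv (n + 2) (n + 2 + k) l)
          - wIP (n + 2) l l from by ring]
    rw [wIP_rotInv n (n + 2 + k) l, ← hTdef, ← hSdef]
    field_simp
  have d4 : cDim (n + 2) (n + 2 + k) (rotInv (n + 2) (n + 2 + k) (fun _ => 1))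
      = (2 * (((n : ℚ) + 1) * ((n : ℚ) + 2) / 2) + ((n : ℚ) + 1) * ((n + 2 + k : ℕ) : ℚ)
          - 2 * ((n : ℚ) + 2) * ((n : ℚ) + 1)) / (2 * ((n : ℚ) + 2)) := by
    rw [cDim]
    show (wIP (n + 2) (rotInv (n + 2) (n + 2 + k) (fun _ : Fin (n + 1) => (1 : ℤ)))
          (rotInv (n + 2) (n + 2 + k) (fun _ : Fin (n + 1) => (1 : ℤ)))
        - wIP (n + 2) (fun _ : Fin (n + 1) => (1 : ℤ)) (fun _ : Fin (n + 1) => (1 : ℤ)))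
        / (2 * ((n + 2 + k : ℕ) : ℚ)) = _
    rw [wIP_rotInv n (n + 2 + k) (fun _ => (1 : ℤ)), hT1, hS1]
    field_simp
  refine ⟨⟨0, ?_⟩, ⟨0, ?_⟩, ⟨(n : ℤ) + 1 - ∑ i, l i, ?_⟩⟩
  · rw [d1, hnal]
    push_cast
    field_simp
    ring
  · rw [d1, d2, hnal]
    push_cast
    field_simp
    ring
  · rw [d3, d4, hnal]
    have hSZ : ((∑ i : Fin (n + 1), l i : ℤ) : ℚ) = S := by
      rw [hSdef]; push_cast; rfl
    push_cast [hSZ]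
    field_simp
    rw [show (∑ x, ((l x : ℤ) : ℚ)) = S from rfl]
    ring

end
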